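/- Define S(a_1,…,a_n) recursively by S(a_1) = a_1 + 1 and S(a_1,…,a_n) = S(a_1,…,a_{n−1}) + (a_n − 1)·S(a_1,…,a_{n−1} − 1) (with S(a_1,…,a_{n−1}−1) := S(a_1,…,a_{n−2}) when a_{n−1} = 2 and n > 2, and S(a_1 − 1) := a_1 when n = 2). Then for all a_1 ≥ 2 and a_i ≥ 2 (i ≥ 2), 4·Π_{i=1}^{n}(2^{a_i} − 1) ≥ (4/3)·S(a_1,…,a_n)^2. -/

import Mathlib

/-- Number of bases of a snake `S(a_1, …, a_n)`, via the lattice-path recursion.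
The list is given in reverse order `[a_n, …, a_1]`. -/
def snakeBases : List ℤ → ℤ
  | [] => 1
  | [a] => a + 1
  | a :: b :: l =>
      snakeBases (b :: l) +
        (a - 1) * (if b = 2 ∧ l ≠ [] then snakeBases l else snakeBases ((b - 1) :: l))
termination_by l => l.length


lemma snake_one (c : ℤ) (l' : List ℤ) : snakeBases (1 :: c :: l') = snakeBases (c :: l') := by
  rw [snakeBases]; ring

lemma snake_cons (a b : ℤ) (l : List ℤ) :
    snakeBases (a :: b :: l) = snakeBases (b :: l) + (a - 1) * snakeBases ((b - 1) :: l) := by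
  rw [snakeBases]
  by_cases hb : b = 2 ∧ l ≠ []
  · rw [if_pos hb]
    obtain ⟨rfl, hl⟩ := hb
    obtain ⟨c, l', rfl⟩ := List.exists_cons_of_ne_nil hl
    have h1 : (2:ℤ) - 1 = 1 := by norm_num
    rw [h1, snake_one]
  · rw [if_neg hb]

def snakeDec : List ℤ → List ℤ
  | [] => []
  | a :: t => (a - 1) :: t

lemma snake_cons' (a : ℤ) (t : List ℤ) (ht : t ≠ []) :
    snakeBases (a :: t) = snakeBases t + (a - 1) * snakeBases (snakeDec t) := by
  obtain ⟨b, t', rfl⟩ := List.exists_cons_of_ne_nil ht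
  exact snake_cons a b t'

lemma nat_ineqs (n : ℕ) (hn : 2 ≤ n) :
    4*n^2+4*n+10 ≤ 9*2^n ∧ 4*n^2+5 ≤ 6*2^n ∧ 4*n^2+5 ≤ 4*n + 4*2^n ∧
    n^2+2*n+4 ≤ 3*2^n ∧ n^2+n+2 ≤ 2*2^n ∧ 3*n^2+4 ≤ 4*2^n := by
  induction n, hn using Nat.le_induction with
  | base => norm_num
  | succ n hn ih =>
    obtain ⟨h1,h2,h3,h4,h5,h6⟩ := ih
    have h2n : 4 ≤ 2^n := by
      calc 4 = 2^2 := rfl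
      _ ≤ 2^n := Nat.pow_le_pow_right (by norm_num) hn
    simp only [pow_succ]
    refine ⟨?_,?_,?_,?_,?_,?_⟩ <;> nlinarith [h1,h2,h3,h4,h5,h6,h2n,hn]

lemma qfacts (a : ℤ) (ha : 2 ≤ a) :
    ((2*(a:ℚ)+1)^2 + 9 ≤ 9 * (2:ℚ)^a) ∧ (4*(a:ℚ)^2+5 ≤ 6 * (2:ℚ)^a) ∧
    ((2*(a:ℚ)-1)^2 + 4 ≤ 4 * (2:ℚ)^a) ∧ ((a:ℚ)^2+2*a+4 ≤ 3*(2:ℚ)^a) ∧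
    ((a:ℚ)^2+a+2 ≤ 2*(2:ℚ)^a) ∧ (3*(a:ℚ)^2+4 ≤ 4*(2:ℚ)^a) := by
  lift a to ℕ using by linarith
  have hn : 2 ≤ a := by exact_mod_cast ha
  obtain ⟨h1,h2,h3,h4,h5,h6⟩ := nat_ineqs a hn
  have hQ : (2:ℚ)^((a:ℤ)) = ((2^a : ℕ) : ℚ) := by
    rw [zpow_natCast]; push_cast; ring
  rw [hQ]
  have c1 : (4*((a:ℕ):ℚ)^2+4*((a:ℕ):ℚ)+10 ≤ 9*((2^a:ℕ):ℚ)) := by exact_mod_cast h1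
  have c3 : (4*((a:ℕ):ℚ)^2+5 ≤ 4*((a:ℕ):ℚ) + 4*((2^a:ℕ):ℚ)) := by exact_mod_cast h3
  refine ⟨?_, by exact_mod_cast h2, ?_, by exact_mod_cast h4, by exact_mod_cast h5, by exact_mod_cast h6⟩
  · push_cast at c1 ⊢; nlinarith [c1]
  · push_cast at c3 ⊢; nlinarith [c3]

lemma prod_pos' (l : List ℤ) (h : ∀ x ∈ l, 2 ≤ x) :
    0 < (l.map fun x => (2:ℚ)^x - 1).prod := by
  induction l with
  | nil => simp
  | cons a t ih =>
    simp only [List.map_cons, List.prod_cons]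
    have ha : 2 ≤ a := h a List.mem_cons_self
    have h4 : (4:ℚ) ≤ 2^a := by
      calc (4:ℚ) = 2^(2:ℤ) := by norm_num
      _ ≤ 2^a := by
        apply zpow_le_zpow_right₀ (by norm_num) ha
    have hP := ih (fun x hx => h x (List.mem_cons_of_mem _ hx))
    nlinarith

lemma main_ineq (l : List ℤ) (hne : l ≠ []) (h : ∀ x ∈ l, 2 ≤ x) :
    (snakeBases l : ℚ)^2 ≤ 3 * (l.map fun x => (2:ℚ)^x - 1).prod ∧
    (snakeBases l : ℚ) * (snakeBases (snakeDec l) : ℚ) ≤ 2 * (l.map fun x => (2:ℚ)^x - 1).prod ∧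
    3 * (snakeBases (snakeDec l) : ℚ)^2 ≤ 4 * (l.map fun x => (2:ℚ)^x - 1).prod := by
  induction l with
  | nil => exact absurd rfl hne
  | cons a t ih =>
    have ha : 2 ≤ a := h a List.mem_cons_self
    have ha' : (2:ℚ) ≤ (a:ℚ) := by exact_mod_cast ha
    obtain ⟨hA, hB, hC, hD, hE, hF⟩ := qfacts a ha
    cases t with
    | nil =>
      simp only [snakeDec, List.map_cons, List.map_nil, List.prod_cons, List.prod_nil, mul_one]
      have e1 : snakeBases [a] = a + 1 := by rw [snakeBases]
      have e2 : snakeBases [a - 1] = a := by rw [snakeBases]; ring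
      rw [e1, e2]
      push_cast
      refine ⟨by nlinarith, by nlinarith, by nlinarith⟩
    | cons b t' =>
      have htne : (b :: t') ≠ [] := by simp
      have ht : ∀ x ∈ b :: t', 2 ≤ x := fun x hx => h x (List.mem_cons_of_mem _ hx)
      obtain ⟨h1, h2, h3⟩ := ih htne ht
      have hP : 0 < ((b :: t').map fun x => (2:ℚ)^x - 1).prod := prod_pos' _ ht
      have ef : snakeBases (a :: b :: t') =
          snakeBases (b :: t') + (a - 1) * snakeBases (snakeDec (b :: t')) :=
        snake_cons' a _ htne
      have eg : snakeBases (snakeDec (a :: b :: t')) =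
          snakeBases (b :: t') + (a - 2) * snakeBases (snakeDec (b :: t')) := by
        show snakeBases ((a - 1) :: b :: t') = _
        rw [snake_cons' (a - 1) _ htne]; ring
      have eP : ((a :: b :: t').map fun x => (2:ℚ)^x - 1).prod =
          ((2:ℚ)^a - 1) * ((b :: t').map fun x => (2:ℚ)^x - 1).prod := by
        simp [List.prod_cons]
      rw [ef, eg, eP]
      set F : ℚ := (snakeBases (b :: t') : ℚ) with hFdef
      set G : ℚ := (snakeBases (snakeDec (b :: t')) : ℚ) with hGdef
      set P : ℚ := ((b :: t').map fun x => (2:ℚ)^x - 1).prod with hPdef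
      push_cast
      have t2 : 0 ≤ 3*P - F^2 := by linarith
      have t1 : 0 ≤ (9*(2:ℚ)^a - 9 - (2*a+1)^2) * P :=
        mul_nonneg (by nlinarith) (le_of_lt hP)
      have t3 : 0 ≤ ((a:ℚ)-1) * (2*P - F*G) :=
        mul_nonneg (by linarith) (by linarith)
      have t4 : 0 ≤ ((a:ℚ)-1)^2 * (4*P - 3*G^2) :=
        mul_nonneg (sq_nonneg _) (by linarith)
      have t5 : 0 ≤ (2*(a:ℚ)-3) * (2*P - F*G) :=
        mul_nonneg (by linarith) (by linarith)
      have t6 : 0 ≤ ((a:ℚ)-1)*((a:ℚ)-2) * (4*P - 3*G^2) :=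
        mul_nonneg (mul_nonneg (by linarith) (by linarith)) (by linarith)
      have t7 : 0 ≤ ((a:ℚ)-2) * (2*P - F*G) :=
        mul_nonneg (by linarith) (by linarith)
      have t8 : 0 ≤ ((a:ℚ)-2)^2 * (4*P - 3*G^2) :=
        mul_nonneg (sq_nonneg _) (by linarith)
      have tB : 0 ≤ (6*(2:ℚ)^a - 6 - (4*(a:ℚ)^2-1)) * P :=
        mul_nonneg (by nlinarith) (le_of_lt hP)
      have tC : 0 ≤ (4*(2:ℚ)^a - 4 - (2*(a:ℚ)-1)^2) * P :=
        mul_nonneg (by nlinarith) (le_of_lt hP)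
      refine ⟨?_, ?_, ?_⟩
      · linarith [t1, t2, t3, t4]
      · linarith [tB, t2, t5, t6]
      · linarith [tC, t2, t7, t8]

theorem stmt_11 (l : List ℤ) (hne : l ≠ []) (h : ∀ x ∈ l, 2 ≤ x) :
    (4 : ℚ) * (l.map fun x => (2 : ℚ) ^ x - 1).prod ≥ 4 / 3 * (snakeBases l : ℚ) ^ 2 := by
  obtain ⟨h1, -, -⟩ := main_ineq l hne h
  linarith
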